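/- Let φ : ℝ → ℝ be strictly convex, C¹, with φ(0) < 0 and φ'(0) = 0, and let f(x) = φ(‖x‖) on ℝⁿ, K = epi(f) ⊆ ℝ^{n+1}, U = ℝⁿ × {0}. Let r > 0 satisfy φ(r) = 0 and let x* ∈ ℝⁿ with ‖x*‖ = r. Then the CARM operator C^S(x,0) = ((1 − φ(t)/(t φ'(t))) x, 0), with t = ‖x‖, satisfies lim_{x→x*, x ∥ x*} ‖C^S(x,0) − (x*,0)‖ / ‖(x,0) − (x*,0)‖ = 0, i.e., the CARM iteration converges superlinearly along the ray through x*. -/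

import Mathlib

open Filter Topology

theorem stmt_19 {n : ℕ} (φ : ℝ → ℝ) (φ' : ℝ → ℝ)
    (hconv : StrictConvexOn ℝ Set.univ φ)
    (hderiv : ∀ t, HasDerivAt φ (φ' t) t)
    (hφ0 : φ 0 < 0) (hφ'0 : φ' 0 = 0)
    (r : ℝ) (hr : 0 < r) (hφr : φ r = 0)
    (xstar : EuclideanSpace ℝ (Fin n)) (hxstar : ‖xstar‖ = r)
    (CS : EuclideanSpace ℝ (Fin n) → EuclideanSpace ℝ (Fin n))
    (hCS : ∀ x : EuclideanSpace ℝ (Fin n),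
      CS x = (1 - φ ‖x‖ / (‖x‖ * φ' ‖x‖)) • x) :
    Tendsto (fun t : ℝ => ‖CS ((t / r) • xstar) - xstar‖ / ‖(t / r) • xstar - xstar‖)
      (𝓝[>] r) (𝓝 0) := by
  have hmono : ∀ a b : ℝ, a < b → φ' a < φ' b := by
    intro a b hab
    have h1 := hconv.lt_slope_of_hasDerivAt (Set.mem_univ a) (Set.mem_univ b) hab (hderiv a)
    have h2 := hconv.slope_lt_of_hasDerivAt (Set.mem_univ a) (Set.mem_univ b) hab (hderiv b)
    linarith
  have hφ'r : 0 < φ' r := hφ'0 ▸ hmono 0 r hr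
  have hslope : Tendsto (slope φ r) (𝓝[>] r) (𝓝 (φ' r)) :=
    (hasDerivAt_iff_tendsto_slope.mp (hderiv r)).mono_left
      (nhdsWithin_mono _ fun t ht => ne_of_gt ht)
  have hg : Tendsto (fun t : ℝ => 2 * t - r) (𝓝[>] r) (𝓝[>] r) := by
    apply tendsto_nhdsWithin_of_tendsto_nhds_of_eventually_within
    · have : Tendsto (fun t : ℝ => 2 * t - r) (𝓝 r) (𝓝 (2 * r - r)) :=
        ((continuous_const.mul continuous_id).sub continuous_const).tendsto r
      simpa [two_mul] using this.mono_left nhdsWithin_le_nhds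
    · filter_upwards [self_mem_nhdsWithin] with t (ht : r < t)
      show r < 2 * t - r
      linarith
  have hupper : Tendsto (fun t : ℝ => 2 * slope φ r (2 * t - r) - slope φ r t)
      (𝓝[>] r) (𝓝 (φ' r)) := by
    have := ((hslope.comp hg).const_mul 2).sub hslope
    simpa [two_mul, Function.comp] using this
  have hd : Tendsto φ' (𝓝[>] r) (𝓝 (φ' r)) := by
    apply tendsto_of_tendsto_of_tendsto_of_le_of_le' tendsto_const_nhds hupper
    · filter_upwards [self_mem_nhdsWithin] with t (ht : r < t)
      exact (hmono r t ht).le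
    · filter_upwards [self_mem_nhdsWithin] with t (ht : r < t)
      have hkey := hconv.lt_slope_of_hasDerivAt (Set.mem_univ t)
        (Set.mem_univ (2 * t - r)) (by linarith) (hderiv t)
      have e1 : slope φ t (2 * t - r) = 2 * slope φ r (2 * t - r) - slope φ r t := by
        have htr : t - r ≠ 0 := by intro h; linarith [sub_eq_zero.mp h]
        have d1 : (2 * t - r) - t = t - r := by ring
        have d2 : (2 * t - r) - r = 2 * (t - r) := by ring
        rw [slope_def_field, slope_def_field, slope_def_field, d1, d2, hφr]
        field_simp
        ring
      rw [e1] at hkey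
      linarith
  have hF : Tendsto (fun t => slope φ r t / φ' t) (𝓝[>] r) (𝓝 1) := by
    have := hslope.div hd (ne_of_gt hφ'r)
    rw [div_self (ne_of_gt hφ'r)] at this
    exact this
  have habs : Tendsto (fun t => |1 - slope φ r t / φ' t|) (𝓝[>] r) (𝓝 0) := by
    have := ((tendsto_const_nhds :
      Tendsto (fun _ : ℝ => (1 : ℝ)) (𝓝[>] r) (𝓝 1)).sub hF).abs
    simpa using this
  refine habs.congr' ?_
  filter_upwards [self_mem_nhdsWithin] with t (ht : r < t)
  have ht0 : 0 < t := hr.trans ht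
  have htr : 0 < t - r := by linarith
  have hφ't : 0 < φ' t := hφ'r.trans (hmono r t ht)
  have hnorm : ‖((t / r) • xstar : EuclideanSpace ℝ (Fin n))‖ = t := by
    rw [norm_smul, hxstar, Real.norm_eq_abs, abs_of_pos (div_pos ht0 hr)]
    field_simp
  set c : ℝ := 1 - φ t / (t * φ' t) with hc
  have h1 : CS ((t / r) • xstar) - xstar = (c * (t / r) - 1) • xstar := by
    rw [hCS, hnorm, ← hc, smul_smul, sub_smul, one_smul]
  have h2 : ((t / r) • xstar - xstar : EuclideanSpace ℝ (Fin n)) = (t / r - 1) • xstar := by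
    rw [sub_smul, one_smul]
  rw [h1, h2, norm_smul, norm_smul, hxstar, Real.norm_eq_abs, Real.norm_eq_abs]
  have hden : |t / r - 1| * r = t - r := by
    rw [abs_of_pos (by rw [sub_pos]; exact (one_lt_div hr).mpr ht)]
    field_simp
  have hnum : |c * (t / r) - 1| * r = |(t - r) - φ t / φ' t| := by
    have hcr : c * (t / r) - 1 = ((t - r) - φ t / φ' t) / r := by
      rw [hc]; field_simp; ring
    rw [hcr, abs_div, abs_of_pos hr, div_mul_cancel₀ _ (ne_of_gt hr)]
  rw [hden, hnum,
    show slope φ r t = φ t / (t - r) by rw [slope_def_field, hφr, sub_zero]]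
  have key : |(t - r) - φ t / φ' t| = |1 - φ t / (t - r) / φ' t| * (t - r) := by
    have e : (t - r) - φ t / φ' t = (1 - φ t / (t - r) / φ' t) * (t - r) := by
      field_simp
    rw [e, abs_mul, abs_of_pos htr]
  rw [key, mul_div_assoc, div_self (ne_of_gt htr), mul_one]
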